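/- Let E be a directed graph and H ⊆ E^0 a subset such that E^0 \ H is finite, every vertex of E^0 \ H is a finite emitter, and no vertex of E^0 \ H lies on a closed path. Then every saturated subset Z ⊆ E^0 with H ⊆ Z equals E^0. -/

import Mathlib

/-- A directed graph `E = (E⁰, E¹, r, s)`: `V` is the vertex set `E⁰`, `Edg` is the
edge set `E¹`, and `s`, `r` give the source and range of each edge. -/
structure DGraph (V : Type*) (Edg : Type*) where
  s : Edg → V
  r : Edg → V

namespace DGraph

variable {V Edg : Type*}

/-- There is an edge from `v` to `w`. -/
def Adj (G : DGraph V Edg) (v w : V) : Prop := ∃ e, G.s e = v ∧ G.r e = w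

/-- There is a path (possibly of length zero, i.e. a vertex) from `v` to `w`. -/
def Reaches (G : DGraph V Edg) : V → V → Prop := Relation.ReflTransGen G.Adj

/-- A subset `X ⊆ E⁰` is hereditary if `r(e) ∈ X` whenever `s(e) ∈ X`. -/
def Hereditary (G : DGraph V Edg) (X : Set V) : Prop := ∀ e, G.s e ∈ X → G.r e ∈ X

/-- A vertex is a finite emitter if `s⁻¹(v)` is finite and nonempty. -/
def FiniteEmitter (G : DGraph V Edg) (v : V) : Prop :=
  {e | G.s e = v}.Finite ∧ {e | G.s e = v}.Nonempty

/-- A subset `X ⊆ E⁰` is saturated if every finite emitter `v` with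
`r(s⁻¹(v)) ⊆ X` lies in `X`. -/
def Saturated (G : DGraph V Edg) (X : Set V) : Prop :=
  ∀ v, FiniteEmitter G v → (∀ e, G.s e = v → G.r e ∈ X) → v ∈ X

/-- The hereditary saturated closure of `X`: the smallest hereditary and saturated
subset of `E⁰` containing `X`. -/
def satClosure (G : DGraph V Edg) (X : Set V) : Set V :=
  ⋂₀ {Y | Hereditary G Y ∧ Saturated G Y ∧ X ⊆ Y}

/-- The consecutive edges of a path match up: `r(eᵢ) = s(eᵢ₊₁)`. -/
def IsChain (G : DGraph V Edg) (p : List Edg) : Prop :=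
  List.Chain' (fun e f => G.r e = G.s f) p

/-- `p` is a closed path (of length ≥ 1) based at `v`. -/
def IsClosedPathAt (G : DGraph V Edg) (p : List Edg) (v : V) : Prop :=
  ∃ hne : p ≠ [], IsChain G p ∧ G.s (p.head hne) = v ∧ G.r (p.getLast hne) = v

/-- `p` is a closed path (of length ≥ 1). -/
def IsClosedPath (G : DGraph V Edg) (p : List Edg) : Prop := ∃ v, IsClosedPathAt G p v

/-- The vertex set `α⁰ = {s(e₁), …, s(eₙ)}` of a path. -/
def pathVerts (G : DGraph V Edg) (p : List Edg) : Set V := {w | ∃ e ∈ p, G.s e = w}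

/-- An exit of a closed path `e₁⋯eₙ` is an edge `f` with `s(f) = s(eᵢ)` and
`f ≠ eᵢ` for some `i`. -/
def IsExitOf (G : DGraph V Edg) (f : Edg) (p : List Edg) : Prop :=
  ∃ e ∈ p, G.s f = G.s e ∧ f ≠ e

/-- `p` is a simple closed path based at `v`: a closed path whose sources are
pairwise distinct. -/
def IsSimpleClosedPathAt (G : DGraph V Edg) (p : List Edg) (v : V) : Prop :=
  IsClosedPathAt G p v ∧ (p.map G.s).Nodup

end DGraph


lemma path_aux {V Edg : Type*} (G : DGraph V Edg) (g : ℕ → Edg) (f : ℕ → V)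
    (hs : ∀ n, G.s (g n) = f n) (hr : ∀ n, G.r (g n) = f (n+1)) :
    ∀ n, ∃ p : List Edg, ∃ hne : p ≠ [], G.IsChain p ∧ G.s (p.head hne) = f 0 ∧
      G.r (p.getLast hne) = f (n+1) ∧ g 0 ∈ p := by
  intro n
  induction n with
  | zero =>
    exact ⟨[g 0], by simp, List.isChain_singleton _, hs 0, hr 0, by simp⟩
  | succ n ih =>
    obtain ⟨p, hne, hchain, hhead, hlast, hmem⟩ := ih
    refine ⟨p ++ [g (n+1)], by simp, ?_, ?_, ?_, by simp [hmem]⟩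
    · rw [DGraph.IsChain, List.Chain', List.isChain_append]
      refine ⟨hchain, List.isChain_singleton _, ?_⟩
      intro x hx y hy
      rw [List.getLast?_eq_getLast hne] at hx
      simp only [List.head?_cons, Option.mem_some_iff] at hy
      rw [Option.mem_some_iff] at hx
      rw [← hx, ← hy] at *
      rw [hlast, hs]
    · rw [List.head_append_of_ne_nil hne]  -- might not exist; fix later
      exact hhead
    · rw [List.getLast_append]
      exact hr (n+1)

/-- if `E⁰ \ H` is finite, every vertex of `E⁰ \ H` is a finite
emitter, and no vertex of `E⁰ \ H` lies on a closed path, then every saturated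
subset `Z` containing `H` equals `E⁰`. -/
theorem stmt8 {V Edg : Type*} (G : DGraph V Edg) (H : Set V)
    (hfin : Hᶜ.Finite) (hemit : ∀ v, v ∉ H → G.FiniteEmitter v)
    (hnocyc : ∀ v, v ∉ H → ¬ ∃ p : List Edg, G.IsClosedPath p ∧ v ∈ G.pathVerts p)
    (Z : Set V) (hZ : G.Saturated Z) (hHZ : H ⊆ Z) :
    Z = Set.univ := by
  by_contra hne
  have hex : ∃ v, v ∉ Z := by
    by_contra h
    push_neg at h
    exact hne (Set.eq_univ_iff_forall.2 h)
  obtain ⟨v₀, hv₀⟩ := hex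
  have hSsub : (Zᶜ : Set V) ⊆ Hᶜ := fun v hv hvH => hv (hHZ hvH)
  have hSfin : (Zᶜ : Set V).Finite := hfin.subset hSsub
  have step : ∀ v, v ∉ Z → ∃ e, G.s e = v ∧ G.r e ∉ Z := by
    intro v hv
    by_contra h
    push_neg at h
    exact hv (hZ v (hemit v (fun hvH => hv (hHZ hvH))) h)
  choose ed hed1 hed2 using step
  let f : ℕ → (Zᶜ : Set V) := fun n => Nat.rec ⟨v₀, hv₀⟩
    (fun _ w => ⟨G.r (ed w.1 w.2), hed2 w.1 w.2⟩) n
  let g : ℕ → Edg := fun n => ed (f n).1 (f n).2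
  have hgs : ∀ n, G.s (g n) = (f n).1 := fun n => hed1 _ _
  have hgr : ∀ n, G.r (g n) = (f (n+1)).1 := fun n => rfl
  -- pigeonhole
  haveI := hSfin.to_subtype
  obtain ⟨i, j, hij, hfeq⟩ := Finite.exists_ne_map_eq_of_infinite f
  have hfeq' : (f i).1 = (f j).1 := congrArg Subtype.val hfeq
  wlog hlt : i < j generalizing i j
  · exact this j i hij.symm hfeq.symm hfeq'.symm (by omega)
  obtain ⟨k, hk⟩ : ∃ k, j = i + (k + 1) := ⟨j - i - 1, by omega⟩
  obtain ⟨p, hpne, hchain, hhead, hlast, hmem⟩ :=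
    path_aux G (fun m => g (i + m)) (fun m => (f (i + m)).1)
      (fun m => hgs (i + m)) (fun m => hgr (i + m)) k
  refine hnocyc (f i).1 (hSsub (f i).2) ⟨p, ⟨(f i).1, hpne, hchain, hhead, ?_⟩, ?_⟩
  · rw [hlast, ← hk, ← hfeq']
  · exact ⟨g i, by simpa using hmem, hgs i⟩
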